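/- arXiv:1303.4406 — 2 statements merged into one kernel-verified Lean document; each statement's English description precedes it below -/
import Mathlib

section
/- Let K, M ⊆ ℝ^d be nonempty compact convex sets such that K ∪ M is convex, and let E ⊆ ℝ^d be a nonempty closed convex set disjoint from K ∪ M. Suppose the distances d(K, E) and d(M, E) are each realized by unique nearest points y = p(K, E) ∈ K and z = p(M, E) ∈ M, and that the distance d(K ∪ M, E) is also realized by a unique nearest point. If p(K ∪ M, E) = y, then z ∈ K ∩ M; moreover d(K ∪ M, E) = d(K, E) and d(K ∩ M, E) = d(M, E). -/
noncomputable section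

/-- The distance `d(K, E) = inf{‖x − y‖ : x ∈ K, y ∈ E}` between two sets. -/
def setDist {d : ℕ} (K E : Set (EuclideanSpace ℝ (Fin d))) : ℝ :=
  sInf (Set.image2 dist K E)

/-- `x` is the unique nearest point of `K` to `E`. -/
def IsUniqueNearestPoint {d : ℕ} (K E : Set (EuclideanSpace ℝ (Fin d)))
    (x : EuclideanSpace ℝ (Fin d)) : Prop :=
  x ∈ K ∧ Metric.infDist x E = setDist K E ∧
    ∀ y ∈ K, Metric.infDist y E = setDist K E → y = x

lemma setDist_le_infDist {d : ℕ} {A E : Set (EuclideanSpace ℝ (Fin d))}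
    {z : EuclideanSpace ℝ (Fin d)} (hz : z ∈ A) (hE : E.Nonempty) :
    setDist A E ≤ Metric.infDist z E := by
  have hbdd : BddBelow (Set.image2 dist A E) := by
    refine ⟨0, fun r hr => ?_⟩
    obtain ⟨a, ha, e, he, rfl⟩ := hr
    exact dist_nonneg
  refine le_of_forall_pos_le_add fun ε hε => ?_
  obtain ⟨e, heE, hlt⟩ := (Metric.infDist_lt_iff hE).mp
    (by linarith : Metric.infDist z E < Metric.infDist z E + ε)
  calc setDist A E ≤ dist z e := csInf_le hbdd (Set.mem_image2_of_mem hz heE)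
    _ ≤ Metric.infDist z E + ε := hlt.le

/-- Let `K, M` be nonempty compact convex sets with `K ∪ M` convex, and `E` a
nonempty closed convex set disjoint from `K ∪ M`. Suppose `y = p(K,E)`,
`z = p(M,E)` and `p(K ∪ M, E)` are unique nearest points. If `p(K ∪ M, E) = y`,
then `z ∈ K ∩ M`, `d(K ∪ M, E) = d(K, E)` and `d(K ∩ M, E) = d(M, E)`. -/
theorem stmt_6 (d : ℕ) (K M E : Set (EuclideanSpace ℝ (Fin d)))
    (hKc : IsCompact K) (hKne : K.Nonempty) (hKconv : Convex ℝ K)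
    (hMc : IsCompact M) (hMne : M.Nonempty) (hMconv : Convex ℝ M)
    (hUconv : Convex ℝ (K ∪ M))
    (hEc : IsClosed E) (hEne : E.Nonempty) (hEconv : Convex ℝ E)
    (hdisj : Disjoint (K ∪ M) E)
    (y z : EuclideanSpace ℝ (Fin d))
    (hy : IsUniqueNearestPoint K E y) (hz : IsUniqueNearestPoint M E z)
    (hyU : IsUniqueNearestPoint (K ∪ M) E y) :
    z ∈ K ∩ M ∧ setDist (K ∪ M) E = setDist K E ∧
      setDist (K ∩ M) E = setDist M E := by
  obtain ⟨hyK, hyd, hyuniq⟩ := hy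
  obtain ⟨hzM, hzd, hzuniq⟩ := hz
  obtain ⟨hyKM, hydU, hyuniqU⟩ := hyU
  -- d(K∪M,E) ≤ d(M,E)
  have hdUM : setDist (K ∪ M) E ≤ Metric.infDist z E :=
    setDist_le_infDist (Or.inr hzM) hEne
  -- the segment [y,z] lies in K ∪ M
  have hseg : segment ℝ y z ⊆ K ∪ M :=
    hUconv.segment_subset (Or.inl hyK) (Or.inr hzM)
  -- the segment meets K ∩ M
  obtain ⟨x, hxseg, hxK, hxM⟩ :
      ∃ x, x ∈ segment ℝ y z ∧ x ∈ K ∧ x ∈ M := by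
    have hpre : IsPreconnected (segment ℝ y z) := (convex_segment y z).isPreconnected
    obtain ⟨x, hx1, hx2, hx3⟩ := isPreconnected_closed_iff.mp hpre K M
      hKc.isClosed hMc.isClosed hseg ⟨y, left_mem_segment ℝ y z, hyK⟩
      ⟨z, right_mem_segment ℝ y z, hzM⟩
    exact ⟨x, hx1, hx2, hx3⟩
  -- convexity estimate: infDist x E ≤ infDist z E
  obtain ⟨a, b, ha, hb, hab, hx⟩ := hxseg
  obtain ⟨e1, he1E, he1⟩ := hEc.exists_infDist_eq_dist hEne y
  obtain ⟨e2, he2E, he2⟩ := hEc.exists_infDist_eq_dist hEne z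
  have hmem : a • e1 + b • e2 ∈ E := hEconv he1E he2E ha hb hab
  have hdistle : dist x (a • e1 + b • e2) ≤ a * dist y e1 + b * dist z e2 := by
    rw [← hx]
    calc dist (a • y + b • z) (a • e1 + b • e2)
        ≤ dist (a • y) (a • e1) + dist (b • z) (b • e2) := dist_add_add_le _ _ _ _
      _ = a * dist y e1 + b * dist z e2 := by
          rw [dist_smul₀, dist_smul₀, Real.norm_eq_abs, Real.norm_eq_abs,
            abs_of_nonneg ha, abs_of_nonneg hb]
  have hxle : Metric.infDist x E ≤ Metric.infDist z E := by
    have h1 : Metric.infDist x E ≤ a * Metric.infDist y E + b * Metric.infDist z E := by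
      rw [he1, he2]
      exact (Metric.infDist_le_dist_of_mem hmem).trans hdistle
    have h2 : Metric.infDist y E ≤ Metric.infDist z E := by
      rw [hydU]; exact hdUM
    calc Metric.infDist x E ≤ a * Metric.infDist y E + b * Metric.infDist z E := h1
      _ ≤ a * Metric.infDist z E + b * Metric.infDist z E := by
          have := mul_le_mul_of_nonneg_left h2 ha
          linarith
      _ = (a + b) * Metric.infDist z E := by ring
      _ = Metric.infDist z E := by rw [hab, one_mul]
  -- x is a nearest point of M, so x = z
  have hxge : setDist M E ≤ Metric.infDist x E := setDist_le_infDist hxM hEne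
  have hxz : x = z := hzuniq x hxM (le_antisymm (hxle.trans_eq hzd) hxge)
  subst hxz
  refine ⟨⟨hxK, hxM⟩, by rw [← hydU, hyd], ?_⟩
  -- d(K∩M,E) = d(M,E)
  have hle : setDist (K ∩ M) E ≤ setDist M E :=
    (setDist_le_infDist (Set.mem_inter hxK hxM) hEne).trans_eq hzd
  have hge : setDist M E ≤ setDist (K ∩ M) E := by
    have hbdd : BddBelow (Set.image2 dist M E) := by
      refine ⟨0, fun r hr => ?_⟩
      obtain ⟨a', _, e, _, rfl⟩ := hr
      exact dist_nonneg
    have hne2 : (Set.image2 dist (K ∩ M) E).Nonempty :=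
      ⟨dist x hEne.choose, Set.mem_image2_of_mem ⟨hxK, hxM⟩ hEne.choose_spec⟩
    exact csInf_le_csInf hbdd hne2 (Set.image2_subset Set.inter_subset_right le_rfl)
  exact le_antisymm hle hge
end
end

section
/- For t > 0 let L_±(t) = {(2tz, ±(1 − ‖2tz‖²)) : z ∈ ℤ^{d−1}, ‖2tz‖ ≤ 1} ⊆ ℝ^{d−1} × ℝ and let P_t = conv(L_−(t) ∪ L_+(t)). Then P_t ⊆ K := {(x, s) : |s| ≤ 1 − ‖x‖²} for every t > 0, and P_t converges to K in the Hausdorff metric as t → 0⁺. -/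
set_option maxHeartbeats 1000000


noncomputable section

open Topology

/-- The body `K = {(x, s) : |s| ≤ 1 − ‖x‖²}` in `ℝ^{n+1}`, the last coordinate
being `s`. -/
def paraBody (n : ℕ) : Set (EuclideanSpace ℝ (Fin (n + 1))) :=
  {p | |p (Fin.last n)| ≤ 1 - ∑ i : Fin n, p (Fin.castSucc i) ^ 2}

/-- The point `(x, s) ∈ ℝ^n × ℝ = ℝ^{n+1}`. -/
def liftPt (n : ℕ) (x : EuclideanSpace ℝ (Fin n)) (s : ℝ) :
    EuclideanSpace ℝ (Fin (n + 1)) :=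
  (EuclideanSpace.equiv (Fin (n + 1)) ℝ).symm
    (Fin.snoc (EuclideanSpace.equiv (Fin n) ℝ x) s)

/-- The lattice point `2tz ∈ ℝ^n` for `z ∈ ℤ^n`. -/
def latPt (n : ℕ) (t : ℝ) (z : Fin n → ℤ) : EuclideanSpace ℝ (Fin n) :=
  (EuclideanSpace.equiv (Fin n) ℝ).symm (fun i => 2 * t * (z i : ℝ))

/-- The lifted lattice sets
`L_±(t) = {(2tz, ±(1 − ‖2tz‖²)) : z ∈ ℤ^n, ‖2tz‖ ≤ 1}`; `σ = 1` gives `L_+`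
and `σ = -1` gives `L_−`. -/
def liftedLattice (n : ℕ) (t σ : ℝ) : Set (EuclideanSpace ℝ (Fin (n + 1))) :=
  {p | ∃ z : Fin n → ℤ, ‖latPt n t z‖ ≤ 1 ∧
    p = liftPt n (latPt n t z) (σ * (1 - ‖latPt n t z‖ ^ 2))}

/-- The polytope `P_t = conv(L_−(t) ∪ L_+(t))`. -/
def paraPolytope (n : ℕ) (t : ℝ) : Set (EuclideanSpace ℝ (Fin (n + 1))) :=
  convexHull ℝ (liftedLattice n t (-1) ∪ liftedLattice n t 1)

namespace Para18

lemma esq {m : ℕ} (x : EuclideanSpace ℝ (Fin m)) : ‖x‖ ^ 2 = ∑ i, x i ^ 2 := by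
  rw [EuclideanSpace.norm_eq, Real.sq_sqrt (by positivity)]
  simp [sq_abs]

lemma liftPt_castSucc (n : ℕ) (x : EuclideanSpace ℝ (Fin n)) (s : ℝ) (i : Fin n) :
    liftPt n x s (Fin.castSucc i) = x i := by simp [liftPt]

lemma liftPt_last (n : ℕ) (x : EuclideanSpace ℝ (Fin n)) (s : ℝ) :
    liftPt n x s (Fin.last n) = s := by simp [liftPt]

lemma paraBody_convex (n : ℕ) : Convex ℝ (paraBody n) := by
  intro p hp q hq a b ha hb hab
  simp only [paraBody, Set.mem_setOf_eq] at *
  have happ : ∀ j, (a • p + b • q) j = a * p j + b * q j := fun j => rfl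
  have h1 : |(a • p + b • q) (Fin.last n)| ≤ a * |p (Fin.last n)| + b * |q (Fin.last n)| := by
    rw [happ]
    calc |a * p (Fin.last n) + b * q (Fin.last n)|
        ≤ |a * p (Fin.last n)| + |b * q (Fin.last n)| := abs_add_le _ _
      _ = a * |p (Fin.last n)| + b * |q (Fin.last n)| := by
          rw [abs_mul, abs_mul, abs_of_nonneg ha, abs_of_nonneg hb]
  have h2 : ∑ i : Fin n, (a • p + b • q) (Fin.castSucc i) ^ 2
      ≤ a * ∑ i : Fin n, p (Fin.castSucc i) ^ 2 + b * ∑ i : Fin n, q (Fin.castSucc i) ^ 2 := by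
    rw [Finset.mul_sum, Finset.mul_sum, ← Finset.sum_add_distrib]
    refine Finset.sum_le_sum fun i _ => ?_
    rw [happ]
    nlinarith [sq_nonneg (p (Fin.castSucc i) - q (Fin.castSucc i)), mul_nonneg ha hb]
  nlinarith [mul_le_mul_of_nonneg_left hp ha, mul_le_mul_of_nonneg_left hq hb]

lemma lattice_subset (n : ℕ) (t σ : ℝ) (hσ : |σ| = 1) :
    liftedLattice n t σ ⊆ paraBody n := by
  rintro p ⟨z, hz, rfl⟩
  simp only [paraBody, Set.mem_setOf_eq, liftPt_last, liftPt_castSucc]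
  have h1 : (0:ℝ) ≤ 1 - ‖latPt n t z‖ ^ 2 := by nlinarith [norm_nonneg (latPt n t z)]
  rw [abs_mul, hσ, one_mul, abs_of_nonneg h1, ← esq]

lemma part1 (n : ℕ) (t : ℝ) : paraPolytope n t ⊆ paraBody n :=
  convexHull_min
    (Set.union_subset (lattice_subset n t (-1) (by norm_num))
      (lattice_subset n t 1 (by norm_num)))
    (paraBody_convex n)

lemma comb (n : ℕ) (y : EuclideanSpace ℝ (Fin n)) (a b u v : ℝ) (hab : a + b = 1) :
    a • liftPt n y u + b • liftPt n y v = liftPt n y (a * u + b * v) := by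
  apply (EuclideanSpace.equiv (Fin (n+1)) ℝ).injective
  funext j
  show a * liftPt n y u j + b * liftPt n y v j = liftPt n y (a*u+b*v) j
  induction j using Fin.lastCases with
  | last => rw [liftPt_last, liftPt_last, liftPt_last]
  | cast i => rw [liftPt_castSucc, liftPt_castSucc, liftPt_castSucc, ← add_mul, hab, one_mul]

lemma mem_polytope (n : ℕ) (t : ℝ) (z : Fin n → ℤ) (hy : ‖latPt n t z‖ ≤ 1) (s' : ℝ)
    (hs' : |s'| ≤ 1 - ‖latPt n t z‖ ^ 2) :
    liftPt n (latPt n t z) s' ∈ paraPolytope n t := by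
  set y := latPt n t z
  set c := 1 - ‖y‖ ^ 2 with hc
  have hc0 : 0 ≤ c := le_trans (abs_nonneg s') hs'
  have hm : liftPt n y (-c) ∈ liftedLattice n t (-1) ∪ liftedLattice n t 1 :=
    Or.inl ⟨z, hy, by rw [hc]; ring_nf; rfl⟩
  have hp : liftPt n y c ∈ liftedLattice n t (-1) ∪ liftedLattice n t 1 :=
    Or.inr ⟨z, hy, by rw [hc]; ring_nf; rfl⟩
  have hmem : ∀ w ∈ (liftedLattice n t (-1) ∪ liftedLattice n t 1), w ∈ paraPolytope n t :=
    fun w hw => subset_convexHull ℝ _ hw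
  have hconv : Convex ℝ (paraPolytope n t) := convex_convexHull ℝ _
  rcases eq_or_lt_of_le hc0 with hceq | hcpos
  · have hs0 : s' = 0 := by
      rw [abs_le] at hs'
      have g1 := hs'.1
      have g2 := hs'.2
      exact le_antisymm (by linarith) (by linarith)
    have := hconv (hmem _ hm) (hmem _ hp) (by norm_num : (0:ℝ) ≤ 1/2)
      (by norm_num : (0:ℝ) ≤ 1/2) (by norm_num)
    rwa [comb n y _ _ _ _ (by norm_num), show (1/2 : ℝ) * (-c) + (1/2) * c = s' by
      rw [hs0]; ring] at this
  · set a := (c - s') / (2 * c)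
    set b := (c + s') / (2 * c)
    rw [abs_le] at hs'
    have ha : 0 ≤ a := div_nonneg (by linarith [hs'.2]) (by linarith)
    have hb : 0 ≤ b := div_nonneg (by linarith [hs'.1]) (by linarith)
    have hab : a + b = 1 := by
      show (c - s') / (2 * c) + (c + s') / (2 * c) = 1
      rw [← add_div, div_eq_one_iff_eq (mul_pos two_pos hcpos).ne']; ring
    have := hconv (hmem _ hm) (hmem _ hp) ha hb hab
    rwa [comb n y _ _ _ _ hab, show a * (-c) + b * c = s' by
      show (c - s') / (2 * c) * (-c) + (c + s') / (2 * c) * c = s'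
      rw [div_mul_eq_mul_div, div_mul_eq_mul_div, ← add_div,
        div_eq_iff (mul_pos two_pos hcpos).ne']; ring] at this

lemma cover (n : ℕ) (hn : 1 ≤ n) (t : ℝ) (ht : 0 < t) (ht' : 4 * n * t ≤ 1)
    (p : EuclideanSpace ℝ (Fin (n + 1))) (hp : p ∈ paraBody n) :
    ∃ q ∈ paraPolytope n t, dist p q ≤ 25 * n * t := by
  set x : EuclideanSpace ℝ (Fin n) :=
    (EuclideanSpace.equiv (Fin n) ℝ).symm (fun i => p (Fin.castSucc i)) with hxdef
  set s := p (Fin.last n) with hsdef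
  have hxi : ∀ i, x i = p (Fin.castSucc i) := fun i => rfl
  have hps : |s| ≤ 1 - ‖x‖ ^ 2 := by
    rw [esq]
    simpa only [hxi, paraBody, Set.mem_setOf_eq] using hp
  have hn' : (1:ℝ) ≤ n := by exact_mod_cast hn
  have hnt : 0 < (n:ℝ) * t := by positivity
  have hx1 : ‖x‖ ≤ 1 := by nlinarith [abs_nonneg s, norm_nonneg x]
  set δ := 4 * (n:ℝ) * t with hδ
  have hδ0 : 0 ≤ δ := by positivity
  set z : Fin n → ℤ := fun i => round ((1 - δ) * x i / (2 * t)) with hz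
  set y := latPt n t z with hy
  have hyi : ∀ i, |y i - (1 - δ) * x i| ≤ t := by
    intro i
    have h1 : y i = 2 * t * (z i : ℝ) := rfl
    have h2 : y i - (1 - δ) * x i
        = 2 * t * ((round ((1 - δ) * x i / (2 * t)) : ℝ) - (1 - δ) * x i / (2 * t)) := by
      rw [h1, hz]
      field_simp
    rw [h2, abs_mul, abs_of_pos (by linarith : (0:ℝ) < 2 * t)]
    have h3 : |(round ((1 - δ) * x i / (2 * t)) : ℝ) - (1 - δ) * x i / (2 * t)| ≤ 1/2 := by
      rw [abs_sub_comm]; exact abs_sub_round _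
    nlinarith [mul_le_mul_of_nonneg_left h3 (le_of_lt (by linarith : (0:ℝ) < 2 * t))]
  have hn1 : ‖y - (1 - δ) • x‖ ≤ n * t := by
    have hv : ∀ i, (y - (1 - δ) • x) i = y i - (1 - δ) * x i := fun i => rfl
    have h1 : ‖y - (1 - δ) • x‖ ^ 2 ≤ n * t ^ 2 := by
      rw [esq]
      calc ∑ i, (y - (1 - δ) • x) i ^ 2 ≤ ∑ _i : Fin n, t ^ 2 := by
            refine Finset.sum_le_sum fun i _ => ?_
            rw [hv]
            have h4 := abs_le.mp (hyi i)
            nlinarith [h4.1, h4.2]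
        _ = n * t ^ 2 := by simp [mul_comm]
    nlinarith [norm_nonneg (y - (1 - δ) • x)]
  have hyx : ‖y - x‖ ≤ 5 * n * t := by
    have h1 : y - x = (y - (1 - δ) • x) + ((1 - δ) • x - x) := by abel
    have h2 : (1 - δ) • x - x = (-δ) • x := by
      module
    calc ‖y - x‖ ≤ ‖y - (1 - δ) • x‖ + ‖(1 - δ) • x - x‖ := by
          rw [h1]; exact norm_add_le _ _
      _ ≤ n * t + δ * ‖x‖ := by
          rw [h2, norm_smul]
          have : ‖(-δ : ℝ)‖ = δ := by rw [Real.norm_eq_abs, abs_neg, abs_of_nonneg hδ0]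
          rw [this]
          linarith [hn1]
      _ ≤ 5 * n * t := by nlinarith [norm_nonneg x]
  have hy1 : ‖y‖ ≤ 1 := by
    have : ‖y‖ ≤ ‖y - (1 - δ) • x‖ + ‖(1 - δ) • x‖ := by
      calc ‖y‖ = ‖(y - (1 - δ) • x) + (1 - δ) • x‖ := by rw [sub_add_cancel]
        _ ≤ ‖y - (1 - δ) • x‖ + ‖(1 - δ) • x‖ := norm_add_le _ _
    rw [norm_smul, Real.norm_eq_abs, abs_of_nonneg (by linarith : (0:ℝ) ≤ 1 - δ)] at this
    nlinarith [norm_nonneg x]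
  set c := 1 - ‖y‖ ^ 2 with hcdef
  have hc0 : 0 ≤ c := by nlinarith [norm_nonneg y]
  have hclose : |s| - 20 * n * t ≤ c := by
    have h1 : ‖y‖ - ‖x‖ ≤ ‖y - x‖ := norm_sub_norm_le y x
    have h2 : ‖y‖ ≤ ‖x‖ + 5 * n * t := by linarith
    have h3 : ‖y‖ ^ 2 ≤ ‖x‖ ^ 2 + 20 * n * t := by
      nlinarith [norm_nonneg y, norm_nonneg x]
    rw [hcdef]; linarith
  set s' := max (-c) (min c s) with hs'def
  have hs'le : |s'| ≤ c := by
    rw [abs_le]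
    refine ⟨le_max_left _ _, max_le (by linarith) (min_le_left _ _)⟩
  have hss' : |s - s'| ≤ 20 * n * t := by
    rcases le_or_gt s c with h1 | h1
    · rcases le_or_gt (-c) s with h2 | h2
      · have : s' = s := by rw [hs'def, min_eq_right h1, max_eq_right h2]
        rw [this, sub_self, abs_zero]; positivity
      · have : s' = -c := by
          rw [hs'def, min_eq_right h1, max_eq_left (le_of_lt h2)]
        rw [this]
        have habs : |s| = -s := abs_of_neg (by linarith)
        rw [abs_of_nonpos (by linarith)]
        linarith [hclose]
    · have : s' = c := by
        rw [hs'def, min_eq_left (le_of_lt h1), max_eq_right (by linarith)]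
      rw [this]
      have habs : |s| = s := abs_of_nonneg (by linarith)
      rw [abs_of_nonneg (by linarith)]
      linarith [hclose]
  refine ⟨liftPt n y s', mem_polytope n t z hy1 s' hs'le, ?_⟩
  have hdist : dist p (liftPt n y s') ^ 2 = ∑ j, (p j - liftPt n y s' j) ^ 2 := by
    rw [EuclideanSpace.dist_eq, Real.sq_sqrt (by positivity)]
    simp [Real.dist_eq, sq_abs]
  have hsum : ∑ j, (p j - liftPt n y s' j) ^ 2
      = (∑ i : Fin n, (x i - y i) ^ 2) + (s - s') ^ 2 := by
    rw [Fin.sum_univ_castSucc]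
    congr 1
    · refine Finset.sum_congr rfl fun i _ => ?_
      rw [liftPt_castSucc, ← hxi]
    · rw [liftPt_last, ← hsdef]
  have hxy2 : ∑ i : Fin n, (x i - y i) ^ 2 ≤ (5 * n * t) ^ 2 := by
    have h1 : ∑ i : Fin n, (x i - y i) ^ 2 = ‖x - y‖ ^ 2 := by
      rw [esq]
      exact Finset.sum_congr rfl fun i _ => rfl
    rw [h1, ← norm_neg (x - y), neg_sub]
    nlinarith [norm_nonneg (y - x)]
  have hd2 : dist p (liftPt n y s') ^ 2 ≤ (25 * n * t) ^ 2 := by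
    rw [hdist, hsum]
    nlinarith [abs_nonneg (s - s'), sq_abs (s - s')]
  nlinarith [dist_nonneg (x := p) (y := liftPt n y s')]



end Para18

/-- `P_t ⊆ K` for all `t > 0`, and `P_t → K` in the Hausdorff metric as
`t → 0⁺`. -/
theorem stmt_18 (n : ℕ) (hn : 2 ≤ n) :
    (∀ t : ℝ, 0 < t → paraPolytope n t ⊆ paraBody n) ∧
      Filter.Tendsto (fun t => Metric.hausdorffDist (paraPolytope n t) (paraBody n))
        (𝓝[>] (0 : ℝ)) (𝓝 0) := by
  refine ⟨fun t _ => Para18.part1 n t, ?_⟩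
  have hn1 : 1 ≤ n := by omega
  have hnpos : (0:ℝ) < n := by
    have : 0 < n := by omega
    exact_mod_cast this
  have hev : ∀ᶠ t in 𝓝[>] (0:ℝ),
      Metric.hausdorffDist (paraPolytope n t) (paraBody n) ≤ 25 * n * t := by
    filter_upwards [Ioc_mem_nhdsGT_of_mem
      (show (0:ℝ) ∈ Set.Ico (0:ℝ) (1 / (4 * n)) from ⟨le_refl _, by positivity⟩)] with t ht
    obtain ⟨ht0, ht1⟩ := ht
    have h4 : 4 * (n:ℝ) * t ≤ 1 := by
      have h5 : (0:ℝ) < 4 * n := by positivity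
      calc 4 * (n:ℝ) * t ≤ 4 * n * (1 / (4 * n)) := by nlinarith
        _ = 1 := by field_simp
    refine Metric.hausdorffDist_le_of_infDist (by positivity) ?_ ?_
    · intro q hq
      rw [Metric.infDist_zero_of_mem (Para18.part1 n t hq)]
      positivity
    · intro q hq
      obtain ⟨r, hr, hd⟩ := Para18.cover n hn1 t ht0 h4 q hq
      exact (Metric.infDist_le_dist_of_mem hr).trans hd
  have h0 : ∀ᶠ t in 𝓝[>] (0:ℝ), 0 ≤ Metric.hausdorffDist (paraPolytope n t) (paraBody n) :=
    Filter.Eventually.of_forall fun _ => Metric.hausdorffDist_nonneg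
  have hlim : Filter.Tendsto (fun t : ℝ => 25 * (n:ℝ) * t) (𝓝[>] (0:ℝ)) (𝓝 0) := by
    have h1 := (continuous_const.mul continuous_id).tendsto (0:ℝ)
      (f := fun t : ℝ => 25 * (n:ℝ) * t)
    simp only [mul_zero, id] at h1
    exact (by simpa [mul_assoc] using h1 : Filter.Tendsto (fun t : ℝ => 25 * (n:ℝ) * t) (𝓝 0) (𝓝 0)).mono_left nhdsWithin_le_nhds
  exact squeeze_zero' h0 hev hlim
end
end
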